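/- If m is a null-additive monotone measure and A ∈ A is an atom of m, then the variation of m on A equals m(A): m̄(A) = m(A). -/

import Mathlib

open Set ENNReal

variable {T : Type*}

/-- `𝒜` is an algebra of subsets of `T`. -/
def IsSetAlgebra' (𝒜 : Set (Set T)) : Prop :=
  ∅ ∈ 𝒜 ∧ (∀ A ∈ 𝒜, Aᶜ ∈ 𝒜) ∧ ∀ A ∈ 𝒜, ∀ B ∈ 𝒜, A ∪ B ∈ 𝒜

/-- `m` is monotone on `𝒜`. -/
def MonoSF (m : Set T → ℝ) (𝒜 : Set (Set T)) : Prop :=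
  ∀ A ∈ 𝒜, ∀ B ∈ 𝒜, A ⊆ B → m A ≤ m B

/-- `m` is subadditive on `𝒜`. -/
def SubaddSF (m : Set T → ℝ) (𝒜 : Set (Set T)) : Prop :=
  ∀ A ∈ 𝒜, ∀ B ∈ 𝒜, m (A ∪ B) ≤ m A + m B

/-- `m` is null-additive on `𝒜`. -/
def NullAddSF (m : Set T → ℝ) (𝒜 : Set (Set T)) : Prop :=
  ∀ A ∈ 𝒜, ∀ B ∈ 𝒜, m B = 0 → m (A ∪ B) = m A

/-- `m` is finitely additive on `𝒜`. -/
def FinAddSF (m : Set T → ℝ) (𝒜 : Set (Set T)) : Prop :=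
  ∀ A ∈ 𝒜, ∀ B ∈ 𝒜, Disjoint A B → m (A ∪ B) = m A + m B

/-- The variation `m̄` of `m`: supremum of `Σᵢ m(Aᵢ)` over finite pairwise disjoint
families `{Aᵢ} ⊆ 𝒜` with each `Aᵢ ⊆ E`. -/
noncomputable def variationSF (m : Set T → ℝ) (𝒜 : Set (Set T)) (E : Set T) : ℝ≥0∞ :=
  ⨆ F ∈ {F : Finset (Set T) |
      (∀ A ∈ F, A ∈ 𝒜 ∧ A ⊆ E) ∧ (F : Set (Set T)).PairwiseDisjoint id},
    ∑ A ∈ F, ENNReal.ofReal (m A)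

/-- `A` is an atom of `m`. -/
def IsAtomOf (m : Set T → ℝ) (𝒜 : Set (Set T)) (A : Set T) : Prop :=
  A ∈ 𝒜 ∧ 0 < m A ∧ ∀ B ∈ 𝒜, B ⊆ A → m B = 0 ∨ m (A \ B) = 0

/-- If `m` is null-additive and monotone and `A` is an atom of `m`, then
`m̄(A) = m(A)`. -/
theorem variation_atom_eq (𝒜 : Set (Set T)) (m : Set T → ℝ)
    (halg : IsSetAlgebra' 𝒜) (h0 : m ∅ = 0) (hpos : ∀ A ∈ 𝒜, 0 ≤ m A)
    (hmono : MonoSF m 𝒜) (hnull : NullAddSF m 𝒜)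
    (A : Set T) (hA : IsAtomOf m 𝒜 A) :
    variationSF m 𝒜 A = ENNReal.ofReal (m A) := by
  obtain ⟨hAmem, hApos, hatom⟩ := hA
  apply le_antisymm
  · refine iSup₂_le fun F hF => ?_
    obtain ⟨hF1, hF2⟩ := hF
    by_cases hex : ∃ B ∈ F, m B ≠ 0
    · obtain ⟨B₀, hB₀F, hB₀⟩ := hex
      obtain ⟨hB₀A, hB₀sub⟩ := hF1 B₀ hB₀F
      rcases hatom B₀ hB₀A hB₀sub with h | h
      · exact absurd h hB₀
      · have hcomp : A \ B₀ ∈ 𝒜 := by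
          have : A \ B₀ = (Aᶜ ∪ B₀)ᶜ := by
            rw [Set.compl_union, compl_compl]; rfl
          rw [this]
          exact halg.2.1 _ (halg.2.2 _ (halg.2.1 _ hAmem) _ hB₀A)
        have hzero : ∀ B ∈ F, B ≠ B₀ → ENNReal.ofReal (m B) = 0 := by
          intro B hBF hne
          obtain ⟨hBA, hBsub⟩ := hF1 B hBF
          have hdisj : Disjoint B B₀ := hF2 hBF hB₀F hne
          have hsub : B ⊆ A \ B₀ := fun x hx =>
            ⟨hBsub hx, fun hx0 => (Set.disjoint_left.mp hdisj hx) hx0⟩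
          have hle : m B ≤ m (A \ B₀) := hmono B hBA _ hcomp hsub
          have : m B = 0 := le_antisymm (h ▸ hle) (hpos B hBA)
          simp [this]
        rw [Finset.sum_eq_single B₀ hzero (fun h => absurd hB₀F h)]
        exact ENNReal.ofReal_le_ofReal (hmono B₀ hB₀A A hAmem hB₀sub)
    · push_neg at hex
      have : ∀ B ∈ F, ENNReal.ofReal (m B) = 0 := fun B hB => by simp [hex B hB]
      rw [Finset.sum_eq_zero this]
      exact zero_le
  · have hmem : ({A} : Finset (Set T)) ∈ {F : Finset (Set T) |
        (∀ B ∈ F, B ∈ 𝒜 ∧ B ⊆ A) ∧ (F : Set (Set T)).PairwiseDisjoint id} := by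
      constructor
      · intro B hB; simp at hB; subst hB; exact ⟨hAmem, subset_rfl⟩
      · simp
    refine le_trans ?_ (le_iSup₂_of_le {A} hmem le_rfl)
    simp
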